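/- (Inverse theorem, version 1, structural form.) In the four-fold coupling setup, assume: (10.6) closure(range i_{K'} + range i_{K''}) = K0; (analyticity) G₊* ⊥ range i_{K''₋,0}, G₋ ⊥ range i_{K'₊,0}, and G₋ ⊥ G₊*; (orthogonality) G₋ ⊥ range i_{K''₋,0} and G₊* ⊥ range i_{K'₊,0}; and (10.7) U0*(range i_{Δ*,0}) = Δ*-part of H0 and U0(range i_{Δ,0}) = Δ-part of H0, where the Δ-part is H0 ⊖ D and the Δ*-part is H0 ⊖ D*. Then K0 decomposes as the orthogonal direct sum K0 = G₋ ⊕ H0 ⊕ G₊*, one has U0*(D) = D*, and moreover D = { h ∈ H0 : U0* h ∈ H0 } and D* = { h ∈ H0 : U0 h ∈ H0 }. -/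

import Mathlib

open ContinuousLinearMap
open scoped ENNReal
set_option maxHeartbeats 1600000

section UAux

variable {H : Type*} [NormedAddCommGroup H] [InnerProductSpace ℂ H] [CompleteSpace H]

lemma unitary_apply_adjoint_apply (u : unitary (H →L[ℂ] H)) (x : H) :
    (u : H →L[ℂ] H) (adjoint (u : H →L[ℂ] H) x) = x := by
  have h := Unitary.coe_mul_star_self u
  rw [Unitary.coe_star, star_eq_adjoint] at h
  calc (u : H →L[ℂ] H) (adjoint (u : H →L[ℂ] H) x)
      = ((u : H →L[ℂ] H) * adjoint (u : H →L[ℂ] H)) x := rfl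
    _ = x := by rw [h]; rfl

lemma adjoint_apply_unitary_apply (u : unitary (H →L[ℂ] H)) (x : H) :
    adjoint (u : H →L[ℂ] H) ((u : H →L[ℂ] H) x) = x := by
  have h := Unitary.coe_star_mul_self u
  rw [star_eq_adjoint] at h
  calc adjoint (u : H →L[ℂ] H) ((u : H →L[ℂ] H) x)
      = (adjoint (u : H →L[ℂ] H) * (u : H →L[ℂ] H)) x := rfl
    _ = x := by rw [h]; rfl

lemma unitary_coe_inv_eq_adjoint (u : unitary (H →L[ℂ] H)) :
    ((u⁻¹ : unitary (H →L[ℂ] H)) : H →L[ℂ] H) = adjoint (u : H →L[ℂ] H) := by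
  rw [← star_eq_adjoint]; rfl

lemma unitary_coe_zpow_add_one (u : unitary (H →L[ℂ] H)) (n : ℤ) (x : H) :
    ((u ^ (n + 1) : unitary (H →L[ℂ] H)) : H →L[ℂ] H) x
      = ((u ^ n : unitary (H →L[ℂ] H)) : H →L[ℂ] H) ((u : H →L[ℂ] H) x) := by
  rw [zpow_add_one]
  rfl

lemma unitary_coe_zpow_sub_one (u : unitary (H →L[ℂ] H)) (n : ℤ) (x : H) :
    ((u ^ (n - 1) : unitary (H →L[ℂ] H)) : H →L[ℂ] H) x
      = ((u ^ n : unitary (H →L[ℂ] H)) : H →L[ℂ] H) (adjoint (u : H →L[ℂ] H) x) := by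
  rw [zpow_sub_one]
  have h : ((u ^ n * u⁻¹ : unitary (H →L[ℂ] H)) : H →L[ℂ] H) x
      = ((u ^ n : unitary (H →L[ℂ] H)) : H →L[ℂ] H)
        (((u⁻¹ : unitary (H →L[ℂ] H)) : H →L[ℂ] H) x) := rfl
  rw [h, unitary_coe_inv_eq_adjoint]

lemma intertwine_zpow {H2 : Type*} [NormedAddCommGroup H2] [InnerProductSpace ℂ H2]
    [CompleteSpace H2]
    (u1 : unitary (H →L[ℂ] H)) (u0 : unitary (H2 →L[ℂ] H2)) (i : H →L[ℂ] H2)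
    (hi : ∀ x, i ((u1 : H →L[ℂ] H) x) = (u0 : H2 →L[ℂ] H2) (i x)) (n : ℤ) :
    ∀ x : H, i (((u1 ^ n : unitary (H →L[ℂ] H)) : H →L[ℂ] H) x)
      = ((u0 ^ n : unitary (H2 →L[ℂ] H2)) : H2 →L[ℂ] H2) (i x) := by
  have hi' : ∀ x, i (adjoint (u1 : H →L[ℂ] H) x) = adjoint (u0 : H2 →L[ℂ] H2) (i x) := by
    intro x
    have h1 := hi (adjoint (u1 : H →L[ℂ] H) x)
    rw [unitary_apply_adjoint_apply] at h1
    have h2 := congrArg (adjoint (u0 : H2 →L[ℂ] H2)) h1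
    rw [adjoint_apply_unitary_apply] at h2
    exact h2.symm
  induction n using Int.induction_on with
  | zero =>
    intro x
    rw [zpow_zero, zpow_zero]
    rfl
  | succ m ih =>
    intro x
    rw [unitary_coe_zpow_add_one, unitary_coe_zpow_add_one, ← hi, ih]
  | pred m ih =>
    intro x
    have h1 : (-(m : ℤ) - 1) = (-(m : ℤ)) - 1 := by ring
    rw [h1, unitary_coe_zpow_sub_one, unitary_coe_zpow_sub_one, ← hi', ih]

end UAux

section Aux

lemma orth_of_closure {K0 : Type*} [NormedAddCommGroup K0] [InnerProductSpace ℂ K0]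
    {x : K0} {s : Set K0} (h : ∀ y ∈ s, (inner ℂ x y : ℂ) = 0) :
    ∀ y ∈ closure s, (inner ℂ x y : ℂ) = 0 := by
  intro y hy
  have hcl : closure s ⊆ {y : K0 | (inner ℂ x y : ℂ) = 0} := by
    refine closure_minimal h ?_
    have : {y : K0 | (inner ℂ x y : ℂ) = 0} = (innerSL ℂ x) ⁻¹' {0} := by
      ext y; simp
    rw [this]
    exact IsClosed.preimage (innerSL ℂ x).continuous isClosed_singleton
  exact hcl hy

lemma lp_eval_continuous {E : Type*} [NormedAddCommGroup E] (n : ℤ) :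
    Continuous fun x : lp (fun _ : ℤ => E) 2 => x n := by
  have : LipschitzWith 1 fun x : lp (fun _ : ℤ => E) 2 => x n := by
    refine LipschitzWith.mk_one fun x y => ?_
    rw [dist_eq_norm, dist_eq_norm]
    have h1 : x n - y n = (x - y) n := by rw [lp.coeFn_sub]; rfl
    rw [h1]
    exact lp.norm_apply_le_norm (by norm_num) (x - y) n
  exact this.continuous

lemma lp_shift_exists {E : Type*} [NormedAddCommGroup E] (y : lp (fun _ : ℤ => E) 2) :
    ∃ x : lp (fun _ : ℤ => E) 2, ∀ m : ℤ, x m = y (m + 1) := by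
  have hy : Memℓp (⇑y) 2 := lp.memℓp y
  have hp : 0 < (2 : ℝ≥0∞).toReal := by norm_num
  have hsum : Summable fun i : ℤ => ‖y i‖ ^ (2 : ℝ≥0∞).toReal :=
    (memℓp_gen_iff hp).1 hy
  have h2 : Summable fun m : ℤ => ‖y (m + 1)‖ ^ (2 : ℝ≥0∞).toReal :=
    (Equiv.addRight (1 : ℤ)).summable_iff.2 hsum
  have hmem : Memℓp (fun m : ℤ => y (m + 1)) 2 := memℓp_gen h2
  exact ⟨⟨_, hmem⟩, fun m => rfl⟩

end Aux

/-- Two subsets of an inner product space are orthogonal. -/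
def OrthSets {K0 : Type*} [NormedAddCommGroup K0] [InnerProductSpace ℂ K0]
    (A B : Set K0) : Prop :=
  ∀ x ∈ A, ∀ y ∈ B, (inner ℂ x y : ℂ) = 0

/-- The closure of the sum of the images of `S''` and `S'` under the embeddings
`i''` and `i'`. -/
def couplingClosure {K0 K' K'' : Type*}
    [NormedAddCommGroup K0] [NormedSpace ℂ K0]
    [NormedAddCommGroup K'] [NormedSpace ℂ K']
    [NormedAddCommGroup K''] [NormedSpace ℂ K'']
    (i'' : K'' →L[ℂ] K0) (i' : K' →L[ℂ] K0) (S'' : Set K'') (S' : Set K') : Set K0 :=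
  closure {z : K0 | ∃ a ∈ S'', ∃ b ∈ S', z = i'' a + i' b}

/-- The image under `v : ℓ²(ℤ, E) → K0` of the sequences supported in `P ⊆ ℤ`. -/
def suppPart {E K0 : Type*}
    [NormedAddCommGroup E] [NormedSpace ℂ E]
    [NormedAddCommGroup K0] [NormedSpace ℂ K0]
    (v : lp (fun _ : ℤ => E) 2 →L[ℂ] K0) (P : Set ℤ) : Set K0 :=
  v '' {x : lp (fun _ : ℤ => E) 2 | ∀ n : ℤ, n ∉ P → x n = 0}

lemma couplingClosure_eq_submodule {K0 K' K'' : Type*}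
    [NormedAddCommGroup K0] [NormedSpace ℂ K0]
    [NormedAddCommGroup K'] [NormedSpace ℂ K']
    [NormedAddCommGroup K''] [NormedSpace ℂ K'']
    (i'' : K'' →L[ℂ] K0) (i' : K' →L[ℂ] K0) (S'' : Submodule ℂ K'') (S' : Submodule ℂ K') :
    couplingClosure i'' i' (S'' : Set K'') (S' : Set K') =
      (((S''.map (i''.toLinearMap)) ⊔ (S'.map (i'.toLinearMap))).topologicalClosure : Set K0) := by
  unfold couplingClosure
  rw [Submodule.topologicalClosure_coe]
  refine congrArg closure ?_
  ext z
  simp only [Set.mem_setOf_eq, SetLike.mem_coe, Submodule.mem_sup, Submodule.mem_map,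
    ContinuousLinearMap.coe_coe]
  constructor
  · rintro ⟨a, ha, b, hb, rfl⟩
    exact ⟨_, ⟨a, ha, rfl⟩, _, ⟨b, hb, rfl⟩, rfl⟩
  · rintro ⟨_, ⟨a, ha, rfl⟩, _, ⟨b, hb, rfl⟩, rfl⟩
    exact ⟨a, ha, b, hb, rfl⟩

/-- The submodule of `ℓ²(ℤ, E)` of sequences supported in `P`. -/
noncomputable def suppSubmodule (E : Type*) [NormedAddCommGroup E] [NormedSpace ℂ E] (P : Set ℤ) :
    Submodule ℂ (lp (fun _ : ℤ => E) 2) where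
  carrier := {x | ∀ n : ℤ, n ∉ P → x n = 0}
  add_mem' := by
    intro a b ha hb n hn
    have h1 : (↑(a + b) : ∀ _ : ℤ, E) n = a n + b n := by rw [lp.coeFn_add]; rfl
    rw [h1, ha n hn, hb n hn, add_zero]
  zero_mem' := by
    intro n hn
    rw [lp.coeFn_zero]
    rfl
  smul_mem' := by
    intro c x hx n hn
    have h1 : (↑(c • x) : ∀ _ : ℤ, E) n = c • x n := by rw [lp.coeFn_smul]; rfl
    rw [h1, hx n hn, smul_zero]

lemma suppSubmodule_isClosed (E : Type*) [NormedAddCommGroup E] [NormedSpace ℂ E] (P : Set ℤ) :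
    IsClosed (suppSubmodule E P : Set (lp (fun _ : ℤ => E) 2)) := by
  have he : (suppSubmodule E P : Set (lp (fun _ : ℤ => E) 2))
      = ⋂ (n : ℤ) (_ : n ∉ P), {x : lp (fun _ : ℤ => E) 2 | x n = 0} := by
    ext x
    simp only [Set.mem_iInter, Set.mem_setOf_eq, SetLike.mem_coe]
    exact Iff.rfl
  rw [he]
  exact isClosed_iInter fun n => isClosed_iInter fun _ =>
    isClosed_eq (lp_eval_continuous n) continuous_const

lemma suppPart_eq (E K0 : Type*) [NormedAddCommGroup E] [NormedSpace ℂ E]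
    [NormedAddCommGroup K0] [NormedSpace ℂ K0]
    (v : lp (fun _ : ℤ => E) 2 →L[ℂ] K0) (P : Set ℤ) :
    suppPart v P = ((suppSubmodule E P).map v.toLinearMap : Set K0) := rfl

/-- **Inverse theorem for the universal extension, version 1 (structural form).**
In the four-fold AA-unitary coupling setup, the hypotheses (10.6), the analyticity and
orthogonality conditions, and the subspace identities (10.7) imply that `K0` decomposes
as the orthogonal direct sum `K0 = G₋ ⊕ H0 ⊕ G₊*`, that `U0*(D) = D*`, and that
`D = {h ∈ H0 : U0* h ∈ H0}` and `D* = {h ∈ H0 : U0 h ∈ H0}`. -/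
theorem stmt_17 {K0 K' K'' Δt Δts : Type*}
    [NormedAddCommGroup K0] [InnerProductSpace ℂ K0] [CompleteSpace K0]
    [NormedAddCommGroup K'] [InnerProductSpace ℂ K'] [CompleteSpace K']
    [NormedAddCommGroup K''] [InnerProductSpace ℂ K''] [CompleteSpace K'']
    [NormedAddCommGroup Δt] [InnerProductSpace ℂ Δt] [CompleteSpace Δt]
    [NormedAddCommGroup Δts] [InnerProductSpace ℂ Δts] [CompleteSpace Δts]
    (U0 : K0 →L[ℂ] K0) (hU0 : U0 ∈ unitary (K0 →L[ℂ] K0))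
    (U' : K' →L[ℂ] K') (hU' : U' ∈ unitary (K' →L[ℂ] K'))
    (U'' : K'' →L[ℂ] K'') (hU'' : U'' ∈ unitary (K'' →L[ℂ] K''))
    (K'p : Submodule ℂ K') (K''m : Submodule ℂ K'')
    (hclosed' : IsClosed (K'p : Set K')) (hclosed'' : IsClosed (K''m : Set K''))
    (hinvar' : ∀ x ∈ K'p, U' x ∈ K'p)
    (hinvar'' : ∀ x ∈ K''m, adjoint U'' x ∈ K''m)
    -- `K'₊` and `K''₋` are *-cyclic for `U'` and `U''`
    (hcyc' : Dense (Submodule.span ℂ {x : K' | ∃ (n : ℤ) (k : K'), k ∈ K'p ∧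
        x = (((⟨U', hU'⟩ : unitary (K' →L[ℂ] K')) ^ n : unitary (K' →L[ℂ] K')) : K' →L[ℂ] K') k}
        : Set K'))
    (hcyc'' : Dense (Submodule.span ℂ {x : K'' | ∃ (n : ℤ) (k : K''), k ∈ K''m ∧
        x = (((⟨U'', hU''⟩ : unitary (K'' →L[ℂ] K'')) ^ n : unitary (K'' →L[ℂ] K'')) : K'' →L[ℂ] K'') k}
        : Set K''))
    -- the bilateral shifts on `ℓ²(ℤ, Δ̃)` and `ℓ²(ℤ, Δ̃*)`
    (J : lp (fun _ : ℤ => Δt) 2 →L[ℂ] lp (fun _ : ℤ => Δt) 2)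
    (hJ : ∀ (x : lp (fun _ : ℤ => Δt) 2) (n : ℤ), (J x) n = x (n - 1))
    (Js : lp (fun _ : ℤ => Δts) 2 →L[ℂ] lp (fun _ : ℤ => Δts) 2)
    (hJs : ∀ (x : lp (fun _ : ℤ => Δts) 2) (n : ℤ), (Js x) n = x (n - 1))
    -- the four isometric embeddings of the four-fold AA-unitary coupling
    (vΔ : lp (fun _ : ℤ => Δt) 2 →L[ℂ] K0) (hvΔ : Isometry vΔ)
    (hvΔJ : ∀ x, vΔ (J x) = U0 (vΔ x))
    (vΔs : lp (fun _ : ℤ => Δts) 2 →L[ℂ] K0) (hvΔs : Isometry vΔs)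
    (hvΔsJ : ∀ x, vΔs (Js x) = U0 (vΔs x))
    (iK' : K' →L[ℂ] K0) (hiK' : Isometry iK') (hiK'U : ∀ x, iK' (U' x) = U0 (iK' x))
    (iK'' : K'' →L[ℂ] K0) (hiK'' : Isometry iK'') (hiK''U : ∀ x, iK'' (U'' x) = U0 (iK'' x))
    -- (10.6): minimality of the coupling
    (h106 : closure {z : K0 | ∃ (a : K') (b : K''), z = iK' a + iK'' b} = Set.univ)
    -- analyticity conditions
    (han1 : OrthSets (suppPart vΔs {n : ℤ | 0 ≤ n}) (iK'' '' (K''m : Set K'')))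
    (han2 : OrthSets (suppPart vΔ {n : ℤ | n < 0}) (iK' '' (K'p : Set K')))
    (han3 : OrthSets (suppPart vΔ {n : ℤ | n < 0}) (suppPart vΔs {n : ℤ | 0 ≤ n}))
    -- orthogonality conditions
    (hor1 : OrthSets (suppPart vΔ {n : ℤ | n < 0}) (iK'' '' (K''m : Set K'')))
    (hor2 : OrthSets (suppPart vΔs {n : ℤ | 0 ≤ n}) (iK' '' (K'p : Set K')))
    -- (10.7): the subspace identities
    (h107a : (adjoint U0) ''
        Set.range (fun δ : Δts => vΔs (lp.single 2 (0 : ℤ) δ))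
      = {h : K0 | h ∈ couplingClosure iK'' iK' (K''m : Set K'') (K'p : Set K') ∧
          ∀ d ∈ couplingClosure iK'' iK' ((adjoint U'') '' (K''m : Set K'')) (K'p : Set K'),
            (inner ℂ h d : ℂ) = 0})
    (h107b : U0 ''
        Set.range (fun δ : Δt => vΔ (lp.single 2 (-1 : ℤ) δ))
      = {h : K0 | h ∈ couplingClosure iK'' iK' (K''m : Set K'') (K'p : Set K') ∧
          ∀ d ∈ couplingClosure iK'' iK' (K''m : Set K'') ((U' : K' → K') '' (K'p : Set K')),
            (inner ℂ h d : ℂ) = 0}) :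
    -- `K0 = G₋ ⊕ H0 ⊕ G₊*` as an orthogonal direct sum
    (OrthSets (suppPart vΔ {n : ℤ | n < 0})
        (couplingClosure iK'' iK' (K''m : Set K'') (K'p : Set K')) ∧
      OrthSets (suppPart vΔ {n : ℤ | n < 0}) (suppPart vΔs {n : ℤ | 0 ≤ n}) ∧
      OrthSets (couplingClosure iK'' iK' (K''m : Set K'') (K'p : Set K'))
        (suppPart vΔs {n : ℤ | 0 ≤ n}) ∧
      (∀ z : K0, ∃ a ∈ suppPart vΔ {n : ℤ | n < 0},
        ∃ b ∈ couplingClosure iK'' iK' (K''m : Set K'') (K'p : Set K'),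
        ∃ c ∈ suppPart vΔs {n : ℤ | 0 ≤ n}, z = a + b + c)) ∧
    -- `U0*(D) = D*`
    ((adjoint U0) ''
        couplingClosure iK'' iK' (K''m : Set K'') ((U' : K' → K') '' (K'p : Set K'))
      = couplingClosure iK'' iK' ((adjoint U'') '' (K''m : Set K'')) (K'p : Set K')) ∧
    -- `D = {h ∈ H0 : U0* h ∈ H0}` and `D* = {h ∈ H0 : U0 h ∈ H0}`
    (couplingClosure iK'' iK' (K''m : Set K'') ((U' : K' → K') '' (K'p : Set K'))
      = {h : K0 | h ∈ couplingClosure iK'' iK' (K''m : Set K'') (K'p : Set K') ∧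
          adjoint U0 h ∈ couplingClosure iK'' iK' (K''m : Set K'') (K'p : Set K')}) ∧
    (couplingClosure iK'' iK' ((adjoint U'') '' (K''m : Set K'')) (K'p : Set K')
      = {h : K0 | h ∈ couplingClosure iK'' iK' (K''m : Set K'') (K'p : Set K') ∧
          U0 h ∈ couplingClosure iK'' iK' (K''m : Set K'') (K'p : Set K')}) := by
  classical
  haveI : Fact ((1 : ℝ≥0∞) ≤ 2) := ⟨by norm_num⟩
  -- basic unitary application facts
  have hA0 : ∀ x : K0, adjoint U0 (U0 x) = x := fun x =>
    adjoint_apply_unitary_apply (⟨U0, hU0⟩ : unitary (K0 →L[ℂ] K0)) x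
  have hA0' : ∀ x : K0, U0 (adjoint U0 x) = x := fun x =>
    unitary_apply_adjoint_apply (⟨U0, hU0⟩ : unitary (K0 →L[ℂ] K0)) x
  have hA'' : ∀ x : K'', U'' (adjoint U'' x) = x := fun x =>
    unitary_apply_adjoint_apply (⟨U'', hU''⟩ : unitary (K'' →L[ℂ] K'')) x
  have hA' : ∀ x : K', U' (adjoint U' x) = x := fun x =>
    unitary_apply_adjoint_apply (⟨U', hU'⟩ : unitary (K' →L[ℂ] K')) x
  -- adjoint intertwining
  have hiK'A : ∀ x : K', iK' (adjoint U' x) = adjoint U0 (iK' x) := by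
    intro x
    have h1 := hiK'U (adjoint U' x)
    rw [hA'] at h1
    have h2 := congrArg (adjoint U0) h1
    rw [hA0] at h2
    exact h2.symm
  have hiK''A : ∀ x : K'', iK'' (adjoint U'' x) = adjoint U0 (iK'' x) := by
    intro x
    have h1 := hiK''U (adjoint U'' x)
    rw [hA''] at h1
    have h2 := congrArg (adjoint U0) h1
    rw [hA0] at h2
    exact h2.symm
  -- the subspaces
  set Gm : Submodule ℂ K0 := (suppSubmodule Δt {n : ℤ | n < 0}).map vΔ.toLinearMap
    with hGmdef
  set Gp : Submodule ℂ K0 := (suppSubmodule Δts {n : ℤ | 0 ≤ n}).map vΔs.toLinearMap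
    with hGpdef
  set Hc : Submodule ℂ K0 :=
    (K''m.map iK''.toLinearMap ⊔ K'p.map iK'.toLinearMap).topologicalClosure with hHcdef
  set Dc : Submodule ℂ K0 :=
    (K''m.map iK''.toLinearMap ⊔ (K'p.map U'.toLinearMap).map iK'.toLinearMap).topologicalClosure
    with hDcdef
  set Dsc : Submodule ℂ K0 :=
    ((K''m.map (adjoint U'').toLinearMap).map iK''.toLinearMap ⊔
      K'p.map iK'.toLinearMap).topologicalClosure with hDscdef
  -- identifications of the sets in the statement
  have hGmset : suppPart vΔ {n : ℤ | n < 0} = (Gm : Set K0) := by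
    rw [hGmdef]; exact suppPart_eq _ _ _ _
  have hGpset : suppPart vΔs {n : ℤ | 0 ≤ n} = (Gp : Set K0) := by
    rw [hGpdef]; exact suppPart_eq _ _ _ _
  have hHset : couplingClosure iK'' iK' (K''m : Set K'') (K'p : Set K') = (Hc : Set K0) := by
    rw [hHcdef]; exact couplingClosure_eq_submodule _ _ _ _
  have hmapU' : (⇑U' '' (K'p : Set K')) = ((K'p.map U'.toLinearMap : Submodule ℂ K') : Set K') := by
    rw [Submodule.map_coe]; rfl
  have hmapU'' : (⇑(adjoint U'') '' (K''m : Set K''))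
      = ((K''m.map (adjoint U'').toLinearMap : Submodule ℂ K'') : Set K'') := by
    rw [Submodule.map_coe]; rfl
  have hDset : couplingClosure iK'' iK' (K''m : Set K'') (⇑U' '' (K'p : Set K'))
      = (Dc : Set K0) := by
    rw [hmapU', hDcdef]; exact couplingClosure_eq_submodule _ _ _ _
  have hDsset : couplingClosure iK'' iK' (⇑(adjoint U'') '' (K''m : Set K'')) (K'p : Set K')
      = (Dsc : Set K0) := by
    rw [hmapU'', hDscdef]; exact couplingClosure_eq_submodule _ _ _ _
  -- closedness
  have hGmclosed : IsClosed (Gm : Set K0) := by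
    rw [hGmdef, Submodule.map_coe]
    exact (((hvΔ.isUniformInducing).isComplete_iff).2
      (suppSubmodule_isClosed Δt _).isComplete).isClosed
  have hGpclosed : IsClosed (Gp : Set K0) := by
    rw [hGpdef, Submodule.map_coe]
    exact (((hvΔs.isUniformInducing).isComplete_iff).2
      (suppSubmodule_isClosed Δts _).isComplete).isClosed
  have hHclosed : IsClosed (Hc : Set K0) := by
    rw [hHcdef]; exact Submodule.isClosed_topologicalClosure _
  -- inclusions
  have hDH : Dc ≤ Hc := by
    rw [hDcdef, hHcdef]
    refine Submodule.topologicalClosure_mono (sup_le_sup le_rfl (Submodule.map_mono ?_))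
    rintro x ⟨y, hy, rfl⟩
    exact hinvar' y hy
  have hDsH : Dsc ≤ Hc := by
    rw [hDscdef, hHcdef]
    refine Submodule.topologicalClosure_mono (sup_le_sup (Submodule.map_mono ?_) le_rfl)
    rintro x ⟨y, hy, rfl⟩
    exact hinvar'' y hy
  have hK'pH : ∀ k ∈ K'p, iK' k ∈ Hc := by
    intro k hk
    rw [hHcdef]
    exact Submodule.le_topologicalClosure _ (Submodule.mem_sup_right ⟨k, hk, rfl⟩)
  have hK''mH : ∀ k ∈ K''m, iK'' k ∈ Hc := by
    intro k hk
    rw [hHcdef]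
    exact Submodule.le_topologicalClosure _ (Submodule.mem_sup_left ⟨k, hk, rfl⟩)
  -- single computations
  have hJsingle : ∀ δ : Δt, J (lp.single 2 (-1 : ℤ) δ) = lp.single 2 (0 : ℤ) δ := by
    intro δ
    apply lp.ext
    funext n
    rw [hJ]
    by_cases h : n = 0
    · subst h
      have h1 : (0 : ℤ) - 1 = -1 := by norm_num
      rw [h1, lp.single_apply_self, lp.single_apply_self]
    · rw [lp.single_apply_ne _ _ _ (show n - 1 ≠ -1 by omega),
        lp.single_apply_ne _ _ _ h]
  have hJssingle : ∀ δ : Δts, Js (lp.single 2 (-1 : ℤ) δ) = lp.single 2 (0 : ℤ) δ := by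
    intro δ
    apply lp.ext
    funext n
    rw [hJs]
    by_cases h : n = 0
    · subst h
      have h1 : (0 : ℤ) - 1 = -1 := by norm_num
      rw [h1, lp.single_apply_self, lp.single_apply_self]
    · rw [lp.single_apply_ne _ _ _ (show n - 1 ≠ -1 by omega),
        lp.single_apply_ne _ _ _ h]
  have hUv : ∀ δ : Δt, U0 (vΔ (lp.single 2 (-1 : ℤ) δ)) = vΔ (lp.single 2 (0 : ℤ) δ) := by
    intro δ; rw [← hvΔJ, hJsingle]
  have hUvs : ∀ δ : Δts, U0 (vΔs (lp.single 2 (-1 : ℤ) δ)) = vΔs (lp.single 2 (0 : ℤ) δ) := by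
    intro δ; rw [← hvΔsJ, hJssingle]
  have hAv : ∀ δ : Δt, adjoint U0 (vΔ (lp.single 2 (0 : ℤ) δ)) = vΔ (lp.single 2 (-1 : ℤ) δ) := by
    intro δ; rw [← hUv, hA0]
  have hAvs : ∀ δ : Δts,
      adjoint U0 (vΔs (lp.single 2 (0 : ℤ) δ)) = vΔs (lp.single 2 (-1 : ℤ) δ) := by
    intro δ; rw [← hUvs, hA0]
  -- memberships of singles
  have hsmemGm : ∀ δ : Δt, vΔ (lp.single 2 (-1 : ℤ) δ) ∈ Gm := by
    intro δ
    rw [hGmdef]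
    refine ⟨lp.single 2 (-1 : ℤ) δ, fun n hn => ?_, rfl⟩
    exact lp.single_apply_ne _ _ _ (by simp at hn; omega)
  have hsmemGp : ∀ δ : Δts, vΔs (lp.single 2 (0 : ℤ) δ) ∈ Gp := by
    intro δ
    rw [hGpdef]
    refine ⟨lp.single 2 (0 : ℤ) δ, fun n hn => ?_, rfl⟩
    exact lp.single_apply_ne _ _ _ (by simp at hn; omega)
  -- rewrite (10.7)
  rw [hHset, hDset] at h107b
  rw [hHset, hDsset] at h107a
  have himgb : U0 '' Set.range (fun δ : Δt => vΔ (lp.single 2 (-1 : ℤ) δ))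
      = Set.range (fun δ : Δt => vΔ (lp.single 2 (0 : ℤ) δ)) := by
    ext z
    constructor
    · rintro ⟨_, ⟨δ, rfl⟩, rfl⟩
      exact ⟨δ, (hUv δ).symm⟩
    · rintro ⟨δ, rfl⟩
      exact ⟨vΔ (lp.single 2 (-1 : ℤ) δ), ⟨δ, rfl⟩, hUv δ⟩
  have himga : adjoint U0 '' Set.range (fun δ : Δts => vΔs (lp.single 2 (0 : ℤ) δ))
      = Set.range (fun δ : Δts => vΔs (lp.single 2 (-1 : ℤ) δ)) := by
    ext z
    constructor
    · rintro ⟨_, ⟨δ, rfl⟩, rfl⟩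
      exact ⟨δ, (hAvs δ).symm⟩
    · rintro ⟨δ, rfl⟩
      exact ⟨vΔs (lp.single 2 (0 : ℤ) δ), ⟨δ, rfl⟩, hAvs δ⟩
  rw [himgb] at h107b
  rw [himga] at h107a
  -- U0* (D) = D*
  have hUDDs : adjoint U0 '' (Dc : Set K0) = (Dsc : Set K0) := by
    have hsetDD : adjoint U0 ''
        ((K''m.map iK''.toLinearMap ⊔ (K'p.map U'.toLinearMap).map iK'.toLinearMap :
          Submodule ℂ K0) : Set K0)
        = (((K''m.map (adjoint U'').toLinearMap).map iK''.toLinearMap ⊔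
            K'p.map iK'.toLinearMap : Submodule ℂ K0) : Set K0) := by
      ext z
      constructor
      · rintro ⟨w, hw, rfl⟩
        rw [SetLike.mem_coe, Submodule.mem_sup] at hw
        obtain ⟨y1, hy1, y2, hy2, rfl⟩ := hw
        obtain ⟨a, ha, rfl⟩ := hy1
        obtain ⟨b1, hb1, rfl⟩ := hy2
        obtain ⟨b, hb, rfl⟩ := hb1
        rw [SetLike.mem_coe, Submodule.mem_sup]
        refine ⟨iK'' (adjoint U'' a), ⟨adjoint U'' a, ⟨a, ha, rfl⟩, rfl⟩,
          iK' b, ⟨b, hb, rfl⟩, ?_⟩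
        have h1 : adjoint U0 (iK'' a) = iK'' (adjoint U'' a) := (hiK''A a).symm
        have h2 : adjoint U0 (iK' (U' b)) = iK' b := by rw [hiK'U, hA0]
        rw [map_add]
        simp only [ContinuousLinearMap.coe_coe]
        rw [h1, h2]
      · intro hz
        rw [SetLike.mem_coe, Submodule.mem_sup] at hz
        obtain ⟨y1, hy1, y2, hy2, rfl⟩ := hz
        obtain ⟨a1, ha1, rfl⟩ := hy1
        obtain ⟨a, ha, rfl⟩ := ha1
        obtain ⟨b, hb, rfl⟩ := hy2
        refine ⟨iK'' a + iK' (U' b), ?_, ?_⟩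
        · rw [SetLike.mem_coe, Submodule.mem_sup]
          exact ⟨iK'' a, ⟨a, ha, rfl⟩, iK' (U' b), ⟨U' b, ⟨b, hb, rfl⟩, rfl⟩, rfl⟩
        · have h2 : adjoint U0 (iK' (U' b)) = iK' b := by rw [hiK'U, hA0]
          rw [map_add]
          simp only [ContinuousLinearMap.coe_coe]
          rw [← hiK''A a, h2]
    set e : K0 ≃ₗᵢ[ℂ] K0 := Unitary.linearIsometryEquiv (⟨U0, hU0⟩ : unitary (K0 →L[ℂ] K0))
      with hedef
    have hesymm : (⇑(e.symm) : K0 → K0) = ⇑(adjoint U0) := by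
      funext x
      apply e.injective
      rw [e.apply_symm_apply]
      show x = U0 (adjoint U0 x)
      rw [hA0']
    have himgcl : ∀ s : Set K0, ⇑(adjoint U0) '' closure s = closure (⇑(adjoint U0) '' s) := by
      intro s
      have h3 := e.symm.toHomeomorph.image_closure s
      rw [← hesymm]
      exact h3
    rw [hDcdef, hDscdef, Submodule.topologicalClosure_coe, Submodule.topologicalClosure_coe,
      himgcl, hsetDD]
  have hU0Ds : ∀ d ∈ Dsc, U0 d ∈ Dc := by
    intro d hd
    have hd' : d ∈ (Dsc : Set K0) := hd
    rw [← hUDDs] at hd'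
    obtain ⟨d0, hd0, rfl⟩ := hd'
    rw [hA0']
    exact hd0
  have hA0D : ∀ d ∈ Dc, adjoint U0 d ∈ Dsc := by
    intro d hd
    have h1 : adjoint U0 d ∈ (Dsc : Set K0) := by
      rw [← hUDDs]
      exact Set.mem_image_of_mem _ hd
    exact h1
  -- orthogonality between the three pieces
  have oGmH : ∀ x ∈ (Gm : Set K0), ∀ y ∈ (Hc : Set K0), (inner ℂ x y : ℂ) = 0 := by
    intro x hx y hy
    rw [← hHset] at hy
    refine orth_of_closure ?_ y hy
    rintro y' ⟨a, ha, b, hb, rfl⟩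
    rw [inner_add_right]
    have hxm : x ∈ suppPart vΔ {n : ℤ | n < 0} := by rw [hGmset]; exact hx
    have h1 := hor1 x hxm (iK'' a) ⟨a, ha, rfl⟩
    have h2 := han2 x hxm (iK' b) ⟨b, hb, rfl⟩
    rw [h1, h2, add_zero]
  have oGpH : ∀ x ∈ (Gp : Set K0), ∀ y ∈ (Hc : Set K0), (inner ℂ x y : ℂ) = 0 := by
    intro x hx y hy
    rw [← hHset] at hy
    refine orth_of_closure ?_ y hy
    rintro y' ⟨a, ha, b, hb, rfl⟩
    rw [inner_add_right]
    have hxm : x ∈ suppPart vΔs {n : ℤ | 0 ≤ n} := by rw [hGpset]; exact hx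
    have h1 := han1 x hxm (iK'' a) ⟨a, ha, rfl⟩
    have h2 := hor2 x hxm (iK' b) ⟨b, hb, rfl⟩
    rw [h1, h2, add_zero]
  have oGmGp : ∀ x ∈ (Gm : Set K0), ∀ y ∈ (Gp : Set K0), (inner ℂ x y : ℂ) = 0 := by
    intro x hx y hy
    refine han3 x ?_ y ?_
    · rw [hGmset]; exact hx
    · rw [hGpset]; exact hy
  have oHGp : ∀ x ∈ (Hc : Set K0), ∀ y ∈ (Gp : Set K0), (inner ℂ x y : ℂ) = 0 := by
    intro x hx y hy
    rw [← inner_conj_symm]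
    rw [oGpH y hy x hx]
    simp
  have oHGm : ∀ x ∈ (Hc : Set K0), ∀ y ∈ (Gm : Set K0), (inner ℂ x y : ℂ) = 0 := by
    intro x hx y hy
    rw [← inner_conj_symm, oGmH y hy x hx]
    simp
  have oGpGm : ∀ x ∈ (Gp : Set K0), ∀ y ∈ (Gm : Set K0), (inner ℂ x y : ℂ) = 0 := by
    intro x hx y hy
    rw [← inner_conj_symm, oGmGp y hy x hx]
    simp
  -- complete space instances
  haveI instHc : CompleteSpace Hc := by
    rw [hHcdef]
    exact (Submodule.isClosed_topologicalClosure _).completeSpace_coe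
  haveI instDc : CompleteSpace Dc := by
    rw [hDcdef]
    exact (Submodule.isClosed_topologicalClosure _).completeSpace_coe
  haveI instDsc : CompleteSpace Dsc := by
    rw [hDscdef]
    exact (Submodule.isClosed_topologicalClosure _).completeSpace_coe
  haveI instGm : CompleteSpace Gm := hGmclosed.completeSpace_coe
  haveI instGp : CompleteSpace Gp := hGpclosed.completeSpace_coe
  -- decomposition of H along D resp. D*
  have hdecD : ∀ h ∈ Hc, ∃ d ∈ Dc, ∃ δ : Δt, h = d + vΔ (lp.single 2 (0 : ℤ) δ) := by
    intro h hh
    obtain ⟨d, hd, z, hz, hsum⟩ := Dc.exists_add_mem_mem_orthogonal h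
    have hzH : z ∈ Hc := by
      have h1 : z = h - d := by rw [hsum]; abel
      rw [h1]
      exact Submodule.sub_mem Hc hh (hDH hd)
    have hzmem : z ∈ U0 '' Set.range (fun δ : Δt => vΔ (lp.single 2 (-1 : ℤ) δ)) := by
      rw [himgb, h107b]
      refine ⟨hzH, ?_⟩
      intro d' hd'
      exact (Submodule.mem_orthogonal' Dc z).1 hz d' hd'
    rw [himgb] at hzmem
    obtain ⟨δ, hδ⟩ := hzmem
    exact ⟨d, hd, δ, by rw [hsum, ← hδ]⟩
  have hdecDs : ∀ h ∈ Hc, ∃ d ∈ Dsc, ∃ δ : Δts, h = d + vΔs (lp.single 2 (-1 : ℤ) δ) := by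
    intro h hh
    obtain ⟨d, hd, z, hz, hsum⟩ := Dsc.exists_add_mem_mem_orthogonal h
    have hzH : z ∈ Hc := by
      have h1 : z = h - d := by rw [hsum]; abel
      rw [h1]
      exact Submodule.sub_mem Hc hh (hDsH hd)
    have hzmem : z ∈ adjoint U0 '' Set.range (fun δ : Δts => vΔs (lp.single 2 (0 : ℤ) δ)) := by
      rw [himga, h107a]
      refine ⟨hzH, ?_⟩
      intro d' hd'
      exact (Submodule.mem_orthogonal' Dsc z).1 hz d' hd'
    rw [himga] at hzmem
    obtain ⟨δ, hδ⟩ := hzmem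
    exact ⟨d, hd, δ, by rw [hsum, ← hδ]⟩
  -- shift invariance of G₋ and G₊*
  have hU0Gp : ∀ g ∈ Gp, U0 g ∈ Gp := by
    intro g hg
    rw [hGpdef] at hg ⊢
    obtain ⟨x, hx, rfl⟩ := hg
    refine ⟨Js x, fun n hn => ?_, ?_⟩
    · rw [hJs]
      refine hx (n - 1) ?_
      simp only [Set.mem_setOf_eq] at hn ⊢
      omega
    · exact hvΔsJ x
  have hA0Gm : ∀ g ∈ Gm, adjoint U0 g ∈ Gm := by
    intro g hg
    rw [hGmdef] at hg ⊢
    obtain ⟨y, hy, rfl⟩ := hg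
    obtain ⟨x, hx⟩ := lp_shift_exists y
    have hJx : J x = y := by
      apply lp.ext
      funext n
      rw [hJ, hx]
      have h2 : n - 1 + 1 = n := by omega
      rw [h2]
    have h1 : adjoint U0 (vΔ y) = vΔ x := by
      rw [← hJx, hvΔJ, hA0]
    refine ⟨x, fun n hn => ?_, ?_⟩
    · rw [hx]
      refine hy (n + 1) ?_
      simp only [Set.mem_setOf_eq] at hn ⊢
      omega
    · exact h1.symm
  -- `U0` maps `H` into `H + G₊*`, `U0*` maps `H` into `H + G₋`
  have hU0H : ∀ h ∈ Hc, ∃ h' ∈ Hc, ∃ g ∈ Gp, U0 h = h' + g := by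
    intro h hh
    obtain ⟨d, hd, δ, rfl⟩ := hdecDs h hh
    refine ⟨U0 d, hDH (hU0Ds d hd), vΔs (lp.single 2 (0 : ℤ) δ), hsmemGp δ, ?_⟩
    rw [map_add, hUvs]
  have hA0H : ∀ h ∈ Hc, ∃ h' ∈ Hc, ∃ g ∈ Gm, adjoint U0 h = h' + g := by
    intro h hh
    obtain ⟨d, hd, δ, rfl⟩ := hdecD h hh
    refine ⟨adjoint U0 d, hDsH (hA0D d hd), vΔ (lp.single 2 (-1 : ℤ) δ), hsmemGm δ, ?_⟩
    rw [map_add, hAv]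
  -- iterates of `U0` applied to `H` stay in `H + G₋ + G₊*`
  have hstepP : ∀ x : K0, (∃ h ∈ Hc, ∃ g ∈ Gp, x = h + g) →
      ∃ h ∈ Hc, ∃ g ∈ Gp, U0 x = h + g := by
    rintro x ⟨h, hh, g, hg, rfl⟩
    obtain ⟨h', hh', g', hg', heq⟩ := hU0H h hh
    refine ⟨h', hh', g' + U0 g, Submodule.add_mem Gp hg' (hU0Gp g hg), ?_⟩
    rw [map_add, heq]
    abel
  have hstepM : ∀ x : K0, (∃ h ∈ Hc, ∃ g ∈ Gm, x = h + g) →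
      ∃ h ∈ Hc, ∃ g ∈ Gm, adjoint U0 x = h + g := by
    rintro x ⟨h, hh, g, hg, rfl⟩
    obtain ⟨h', hh', g', hg', heq⟩ := hA0H h hh
    refine ⟨h', hh', g' + adjoint U0 g, Submodule.add_mem Gm hg' (hA0Gm g hg), ?_⟩
    rw [map_add, heq]
    abel
  set u0 : unitary (K0 →L[ℂ] K0) := ⟨U0, hU0⟩ with hu0def
  have hcoe0 : (u0 : K0 →L[ℂ] K0) = U0 := rfl
  have hzpowP : ∀ (m : ℕ) (x : K0), (∃ h ∈ Hc, ∃ g ∈ Gp, x = h + g) →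
      ∃ h ∈ Hc, ∃ g ∈ Gp, ((u0 ^ (m : ℤ) : unitary (K0 →L[ℂ] K0)) : K0 →L[ℂ] K0) x = h + g := by
    intro m
    induction m with
    | zero =>
      intro x hx
      have h1 : (((0 : ℕ) : ℤ)) = (0 : ℤ) := rfl
      rw [h1, zpow_zero]
      exact hx
    | succ m ih =>
      intro x hx
      have h1 : (((m + 1 : ℕ) : ℤ)) = (m : ℤ) + 1 := by push_cast; ring
      rw [h1, unitary_coe_zpow_add_one, hcoe0]
      exact ih (U0 x) (hstepP x hx)
  have hzpowM : ∀ (m : ℕ) (x : K0), (∃ h ∈ Hc, ∃ g ∈ Gm, x = h + g) →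
      ∃ h ∈ Hc, ∃ g ∈ Gm, ((u0 ^ (-(m : ℤ)) : unitary (K0 →L[ℂ] K0)) : K0 →L[ℂ] K0) x = h + g := by
    intro m
    induction m with
    | zero =>
      intro x hx
      have h1 : (-((0 : ℕ) : ℤ)) = (0 : ℤ) := rfl
      rw [h1, zpow_zero]
      exact hx
    | succ m ih =>
      intro x hx
      have h1 : (-((m + 1 : ℕ) : ℤ)) = -(m : ℤ) - 1 := by push_cast; ring
      rw [h1, unitary_coe_zpow_sub_one]
      refine ih _ (hstepM x hx)
  have hzpowH : ∀ (n : ℤ), ∀ k ∈ Hc,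
      ∃ h ∈ Hc, ∃ gm ∈ Gm, ∃ gp ∈ Gp,
        ((u0 ^ n : unitary (K0 →L[ℂ] K0)) : K0 →L[ℂ] K0) k = h + gm + gp := by
    intro n k hk
    rcases le_or_gt 0 n with hn | hn
    · obtain ⟨m, rfl⟩ : ∃ m : ℕ, n = (m : ℤ) := ⟨n.toNat, (Int.toNat_of_nonneg hn).symm⟩
      obtain ⟨h, hh, g, hg, heq⟩ := hzpowP m k ⟨k, hk, 0, Submodule.zero_mem Gp, by rw [add_zero]⟩
      exact ⟨h, hh, 0, Submodule.zero_mem Gm, g, hg, by rw [heq, add_zero]⟩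
    · obtain ⟨m, rfl⟩ : ∃ m : ℕ, n = -(m : ℤ) := by
        refine ⟨(-n).toNat, ?_⟩
        have := Int.toNat_of_nonneg (by omega : (0 : ℤ) ≤ -n)
        omega
      obtain ⟨h, hh, g, hg, heq⟩ := hzpowM m k ⟨k, hk, 0, Submodule.zero_mem Gm, by rw [add_zero]⟩
      exact ⟨h, hh, g, hg, 0, Submodule.zero_mem Gp, by rw [heq, add_zero]⟩
  -- the kernel lemma: anything orthogonal to `G₋ + H + G₊*` vanishes
  have hker : ∀ r : K0,
      (∀ y ∈ Gm, (inner ℂ r y : ℂ) = 0) →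
      (∀ y ∈ Hc, (inner ℂ r y : ℂ) = 0) →
      (∀ y ∈ Gp, (inner ℂ r y : ℂ) = 0) → r = 0 := by
    intro r hrGm hrH hrGp
    have horthz : ∀ (n : ℤ), ∀ k ∈ Hc,
        (inner ℂ r (((u0 ^ n : unitary (K0 →L[ℂ] K0)) : K0 →L[ℂ] K0) k) : ℂ) = 0 := by
      intro n k hk
      obtain ⟨h, hh, gm, hgm, gp, hgp, heq⟩ := hzpowH n k hk
      rw [heq, inner_add_right, inner_add_right, hrH h hh, hrGm gm hgm, hrGp gp hgp]
      ring
    have hfK' : ∀ y : K', (inner ℂ r (iK' y) : ℂ) = 0 := by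
      set f : K' →L[ℂ] ℂ := (innerSL ℂ r).comp iK' with hfdef
      have hclosedset : IsClosed {y : K' | (inner ℂ r (iK' y) : ℂ) = 0} := by
        have hc : Continuous fun y : K' => (inner ℂ r (iK' y) : ℂ) :=
          Continuous.inner continuous_const iK'.continuous
        exact isClosed_eq hc continuous_const
      have hgen : {x : K' | ∃ (n : ℤ) (k : K'), k ∈ K'p ∧
          x = (((⟨U', hU'⟩ : unitary (K' →L[ℂ] K')) ^ n :
            unitary (K' →L[ℂ] K')) : K' →L[ℂ] K') k}
          ⊆ (LinearMap.ker (f : K' →ₗ[ℂ] ℂ) : Set K') := by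
        rintro x ⟨n, k, hk, rfl⟩
        rw [SetLike.mem_coe, LinearMap.mem_ker]
        show (inner ℂ r (iK' ((((⟨U', hU'⟩ : unitary (K' →L[ℂ] K')) ^ n :
            unitary (K' →L[ℂ] K')) : K' →L[ℂ] K') k)) : ℂ) = 0
        rw [intertwine_zpow (⟨U', hU'⟩ : unitary (K' →L[ℂ] K')) u0 iK' hiK'U n k]
        exact horthz n (iK' k) (hK'pH k hk)
      have hspan := Submodule.span_le.2 hgen
      intro y
      have hy : y ∈ closure ((Submodule.span ℂ {x : K' | ∃ (n : ℤ) (k : K'), k ∈ K'p ∧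
          x = (((⟨U', hU'⟩ : unitary (K' →L[ℂ] K')) ^ n :
            unitary (K' →L[ℂ] K')) : K' →L[ℂ] K') k}) : Set K') := by
        rw [hcyc'.closure_eq]
        trivial
      have hsub : closure ((Submodule.span ℂ {x : K' | ∃ (n : ℤ) (k : K'), k ∈ K'p ∧
          x = (((⟨U', hU'⟩ : unitary (K' →L[ℂ] K')) ^ n :
            unitary (K' →L[ℂ] K')) : K' →L[ℂ] K') k}) : Set K')
          ⊆ {y : K' | (inner ℂ r (iK' y) : ℂ) = 0} := by
        refine closure_minimal ?_ hclosedset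
        intro z hz
        have h1 := hspan hz
        rw [LinearMap.mem_ker] at h1
        exact h1
      exact hsub hy
    have hfK'' : ∀ y : K'', (inner ℂ r (iK'' y) : ℂ) = 0 := by
      set f : K'' →L[ℂ] ℂ := (innerSL ℂ r).comp iK'' with hfdef
      have hclosedset : IsClosed {y : K'' | (inner ℂ r (iK'' y) : ℂ) = 0} := by
        have hc : Continuous fun y : K'' => (inner ℂ r (iK'' y) : ℂ) :=
          Continuous.inner continuous_const iK''.continuous
        exact isClosed_eq hc continuous_const
      have hgen : {x : K'' | ∃ (n : ℤ) (k : K''), k ∈ K''m ∧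
          x = (((⟨U'', hU''⟩ : unitary (K'' →L[ℂ] K'')) ^ n :
            unitary (K'' →L[ℂ] K'')) : K'' →L[ℂ] K'') k}
          ⊆ (LinearMap.ker (f : K'' →ₗ[ℂ] ℂ) : Set K'') := by
        rintro x ⟨n, k, hk, rfl⟩
        rw [SetLike.mem_coe, LinearMap.mem_ker]
        show (inner ℂ r (iK'' ((((⟨U'', hU''⟩ : unitary (K'' →L[ℂ] K'')) ^ n :
            unitary (K'' →L[ℂ] K'')) : K'' →L[ℂ] K'') k)) : ℂ) = 0
        rw [intertwine_zpow (⟨U'', hU''⟩ : unitary (K'' →L[ℂ] K'')) u0 iK'' hiK''U n k]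
        exact horthz n (iK'' k) (hK''mH k hk)
      have hspan := Submodule.span_le.2 hgen
      intro y
      have hy : y ∈ closure ((Submodule.span ℂ {x : K'' | ∃ (n : ℤ) (k : K''), k ∈ K''m ∧
          x = (((⟨U'', hU''⟩ : unitary (K'' →L[ℂ] K'')) ^ n :
            unitary (K'' →L[ℂ] K'')) : K'' →L[ℂ] K'') k}) : Set K'') := by
        rw [hcyc''.closure_eq]
        trivial
      have hsub : closure ((Submodule.span ℂ {x : K'' | ∃ (n : ℤ) (k : K''), k ∈ K''m ∧
          x = (((⟨U'', hU''⟩ : unitary (K'' →L[ℂ] K'')) ^ n :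
            unitary (K'' →L[ℂ] K'')) : K'' →L[ℂ] K'') k}) : Set K'')
          ⊆ {y : K'' | (inner ℂ r (iK'' y) : ℂ) = 0} := by
        refine closure_minimal ?_ hclosedset
        intro z hz
        have h1 := hspan hz
        rw [LinearMap.mem_ker] at h1
        exact h1
      exact hsub hy
    have hall : ∀ w ∈ {z : K0 | ∃ (a : K') (b : K''), z = iK' a + iK'' b},
        (inner ℂ r w : ℂ) = 0 := by
      rintro w ⟨a, b, rfl⟩
      rw [inner_add_right, hfK' a, hfK'' b, add_zero]
    have hrr : (inner ℂ r r : ℂ) = 0 := by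
      have h1 : r ∈ closure {z : K0 | ∃ (a : K') (b : K''), z = iK' a + iK'' b} := by
        rw [h106]
        trivial
      exact orth_of_closure hall r h1
    exact inner_self_eq_zero.1 hrr
  -- assemble the four statements
  refine ⟨⟨?_, han3, ?_, ?_⟩, ?_, ?_, ?_⟩
  · -- G₋ ⊥ H
    rw [hGmset, hHset]
    exact oGmH
  · -- H ⊥ G₊*
    rw [hHset, hGpset]
    exact oHGp
  · -- decomposition of K0
    intro z
    obtain ⟨a, ha, z1, hz1, hzeq⟩ := Gm.exists_add_mem_mem_orthogonal z
    obtain ⟨b, hb, z2, hz2, hz1eq⟩ := Hc.exists_add_mem_mem_orthogonal z1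
    obtain ⟨c, hc, rr, hrr, hz2eq⟩ := Gp.exists_add_mem_mem_orthogonal z2
    have hrGm : ∀ y ∈ Gm, (inner ℂ rr y : ℂ) = 0 := by
      intro y hy
      have h1 : rr = z1 - b - c := by rw [hz1eq, hz2eq]; abel
      rw [h1, inner_sub_left, inner_sub_left,
        (Submodule.mem_orthogonal' Gm z1).1 hz1 y hy,
        oHGm b hb y hy, oGpGm c hc y hy]
      ring
    have hrH : ∀ y ∈ Hc, (inner ℂ rr y : ℂ) = 0 := by
      intro y hy
      have h1 : rr = z2 - c := by rw [hz2eq]; abel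
      rw [h1, inner_sub_left, (Submodule.mem_orthogonal' Hc z2).1 hz2 y hy,
        oGpH c hc y hy]
      ring
    have hrGp : ∀ y ∈ Gp, (inner ℂ rr y : ℂ) = 0 :=
      fun y hy => (Submodule.mem_orthogonal' Gp rr).1 hrr y hy
    have hr0 : rr = 0 := hker rr hrGm hrH hrGp
    refine ⟨a, ?_, b, ?_, c, ?_, ?_⟩
    · rw [hGmset]; exact ha
    · rw [hHset]; exact hb
    · rw [hGpset]; exact hc
    · rw [hzeq, hz1eq, hz2eq, hr0, add_zero]
      abel
  · -- U0*(D) = D*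
    rw [hDset, hDsset]
    exact hUDDs
  · -- D = {h ∈ H : U0* h ∈ H}
    rw [hDset, hHset]
    ext h
    simp only [Set.mem_setOf_eq, SetLike.mem_coe]
    constructor
    · intro hd
      exact ⟨hDH hd, hDsH (hA0D h hd)⟩
    · rintro ⟨hh, hah⟩
      obtain ⟨d, hd, δ, rfl⟩ := hdecD h hh
      have hg : vΔ (lp.single 2 (-1 : ℤ) δ) ∈ Hc := by
        have h1 : vΔ (lp.single 2 (-1 : ℤ) δ)
            = adjoint U0 (d + vΔ (lp.single 2 (0 : ℤ) δ)) - adjoint U0 d := by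
          rw [map_add, hAv]
          abel
        rw [h1]
        exact Submodule.sub_mem Hc hah (hDsH (hA0D d hd))
      have hzero : vΔ (lp.single 2 (-1 : ℤ) δ) = 0 := by
        have h1 := oGmH _ (hsmemGm δ) _ hg
        exact inner_self_eq_zero.1 h1
      have h2 : adjoint U0 (d + vΔ (lp.single 2 (0 : ℤ) δ)) = adjoint U0 d := by
        rw [map_add, hAv, hzero, add_zero]
      have h3 : d + vΔ (lp.single 2 (0 : ℤ) δ) = d := by
        have h4 := congrArg U0 h2
        rwa [hA0', hA0'] at h4
      rw [h3]
      exact hd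
  · -- D* = {h ∈ H : U0 h ∈ H}
    rw [hDsset, hHset]
    ext h
    simp only [Set.mem_setOf_eq, SetLike.mem_coe]
    constructor
    · intro hd
      exact ⟨hDsH hd, hDH (hU0Ds h hd)⟩
    · rintro ⟨hh, huh⟩
      obtain ⟨d, hd, δ, rfl⟩ := hdecDs h hh
      have hg : vΔs (lp.single 2 (0 : ℤ) δ) ∈ Hc := by
        have h1 : vΔs (lp.single 2 (0 : ℤ) δ)
            = U0 (d + vΔs (lp.single 2 (-1 : ℤ) δ)) - U0 d := by
          rw [map_add, hUvs]
          abel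
        rw [h1]
        exact Submodule.sub_mem Hc huh (hDH (hU0Ds d hd))
      have hzero : vΔs (lp.single 2 (0 : ℤ) δ) = 0 := by
        have h1 := oGpH _ (hsmemGp δ) _ hg
        exact inner_self_eq_zero.1 h1
      have h2 : U0 (d + vΔs (lp.single 2 (-1 : ℤ) δ)) = U0 d := by
        rw [map_add, hUvs, hzero, add_zero]
      have h3 : d + vΔs (lp.single 2 (-1 : ℤ) δ) = d := by
        have h4 := congrArg (adjoint U0) h2
        rwa [hA0, hA0] at h4
      rw [h3]
      exact hd
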